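/- Let α > 0, φ ∈ ω_{α,loc}, X a complex Banach space and T a bounded linear operator on X such that ‖Δ^{-α}𝒯(n)‖ ≤ C·φ(n) for all n ∈ ℕ₀ and some C > 0. For a finitely supported sequence f : ℕ₀ → ℂ define θ(f) := ∑_{n=0}^∞ W^α f(n)·Δ^{-α}𝒯(n) (a finite sum of bounded operators). Then: (1) ‖θ(f)x‖ ≤ C·q_φ(f)·‖x‖ for all f finitely supported and x ∈ X; (2) θ(f*g) = θ(f)∘θ(g) for all finitely supported f, g; (3) θ(h_n^α) = Δ^{-α}𝒯(n) for all n ∈ ℕ₀; in particular θ(e_0) = I and θ(e_1) = T. -/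

import Mathlib

/-- The Cesàro kernel `k^α(n) = Γ(n+α)/(Γ(α)·Γ(n+1))`. -/
noncomputable def cesK (α : ℝ) (n : ℕ) : ℝ :=
  Real.Gamma ((n : ℝ) + α) / (Real.Gamma α * Real.Gamma ((n : ℝ) + 1))

/-- `φ` belongs to the class `ω_{α,loc}` with constant `c`. -/
def omegaLoc (α : ℝ) (φ : ℕ → ℝ) (c : ℝ) : Prop :=
  ∀ j p : ℕ, 1 ≤ j → j ≤ p →
    ((∑ n ∈ Finset.range (j + 1), cesK α n * φ (j + p - n)) +
        ∑ n ∈ Finset.Icc (p + 1) (j + p), cesK α n * φ (j + p - n)) ≤ c * (φ j * φ p)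

/-- The Weyl sum of order `α`: `W^{-α}f(n) = ∑_{j=n}^∞ k^α(j-n)·f(j)`. -/
noncomputable def weylSum (α : ℝ) (f : ℕ → ℂ) : ℕ → ℂ :=
  fun n => ∑ᶠ j : ℕ, (cesK α j : ℂ) * f (j + n)

/-- The forward difference operator `Δh(n) = h(n+1) - h(n)`. -/
def fdiff (f : ℕ → ℂ) : ℕ → ℂ := fun n => f (n + 1) - f n

/-- The Weyl difference of order `α > 0`:
`W^α f(n) = (-1)^m Δ^m W^{-(m-α)} f(n)` with `m = [α]+1`; and `W^0 f = f`. -/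
noncomputable def weylDiff (α : ℝ) (f : ℕ → ℂ) : ℕ → ℂ :=
  if α = 0 then f
  else fun n => (-1 : ℂ) ^ (⌊α⌋₊ + 1) * fdiff^[⌊α⌋₊ + 1] (weylSum ((⌊α⌋₊ : ℝ) + 1 - α) f) n

/-- Convolution of sequences: `(f*g)(n) = ∑_{j=0}^n f(n-j)·g(j)`. -/
noncomputable def conv (f g : ℕ → ℂ) (n : ℕ) : ℂ :=
  ∑ j ∈ Finset.range (n + 1), f (n - j) * g j

/-- `q_φ(f) = ∑_{n=0}^∞ φ(n)·|W^α f(n)|`. -/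
noncomputable def qNorm (α : ℝ) (φ : ℕ → ℝ) (f : ℕ → ℂ) : ℝ :=
  ∑ᶠ n : ℕ, φ n * ‖weylDiff α f n‖

/-- The Cesàro sum of order `α` of a bounded operator `T`:
`Δ^{-α}𝒯(n) = ∑_{j=0}^n k^α(n-j)·T^j`. -/
noncomputable def cesOp {X : Type*} [NormedAddCommGroup X] [NormedSpace ℂ X]
    (α : ℝ) (T : X →L[ℂ] X) (n : ℕ) : X →L[ℂ] X :=
  ∑ j ∈ Finset.range (n + 1), (cesK α (n - j) : ℂ) • T ^ j

/-- The algebra homomorphism `θ(f) = ∑_{n=0}^∞ W^α f(n)·Δ^{-α}𝒯(n)`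
(a finite sum for finitely supported `f`). -/
noncomputable def theta {X : Type*} [NormedAddCommGroup X] [NormedSpace ℂ X]
    (α : ℝ) (T : X →L[ℂ] X) (f : ℕ → ℂ) : X →L[ℂ] X :=
  ∑ᶠ n : ℕ, weylDiff α f n • cesOp α T n

/-- The sequence `h_n^α(j) = k^α(n-j)` for `j ≤ n`, `0` for `j > n`. -/
noncomputable def hseq (α : ℝ) (n : ℕ) : ℕ → ℂ :=
  fun j => if j ≤ n then (cesK α (n - j) : ℂ) else 0

/-- The canonical sequence `e_n(j) = δ_{n,j}`. -/
def eseq (n : ℕ) : ℕ → ℂ := fun j => if j = n then 1 else 0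

lemma cesK_zero {α : ℝ} (hα : 0 < α) : cesK α 0 = 1 := by
  simp [cesK, Real.Gamma_one, (Real.Gamma_pos_of_pos hα).ne']

lemma cesK_rec {α : ℝ} (hα : 0 < α) (n : ℕ) :
    ((n : ℝ) + 1) * cesK α (n + 1) = ((n : ℝ) + α) * cesK α n := by
  have h1 : ((n : ℝ) + α) ≠ 0 := by positivity
  have h2 : ((n : ℝ) + 1) ≠ 0 := by positivity
  have e1 : Real.Gamma ((n : ℝ) + 1 + α) = ((n : ℝ) + α) * Real.Gamma ((n : ℝ) + α) := by
    have := Real.Gamma_add_one h1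
    rw [← this]; ring_nf
  have e2 : Real.Gamma ((n : ℝ) + 1 + 1) = ((n : ℝ) + 1) * Real.Gamma ((n : ℝ) + 1) := by
    have := Real.Gamma_add_one h2
    rw [← this]
  simp only [cesK, Nat.cast_add, Nat.cast_one, e1, e2]
  field_simp

lemma cesK_one_eq (n : ℕ) : cesK 1 n = 1 := by
  simp [cesK, Real.Gamma_one]
  exact (Real.Gamma_pos_of_pos (by positivity)).ne'

lemma cesK_vandermonde {α β : ℝ} (hα : 0 < α) (hβ : 0 < β) (n : ℕ) :
    ∑ i ∈ Finset.range (n + 1), cesK α i * cesK β (n - i) = cesK (α + β) n := by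
  induction n with
  | zero => simp [cesK_zero hα, cesK_zero hβ, cesK_zero (by positivity : (0:ℝ) < α + β)]
  | succ n ih =>
    have key : ((n : ℝ) + 1) * ∑ i ∈ Finset.range (n + 2), cesK α i * cesK β (n + 1 - i)
        = ((n : ℝ) + α + β) * ∑ i ∈ Finset.range (n + 1), cesK α i * cesK β (n - i) := by
      rw [Finset.mul_sum, Finset.mul_sum]
      have expand : ∀ i ∈ Finset.range (n + 2),
          ((n : ℝ) + 1) * (cesK α i * cesK β (n + 1 - i))
          = (i : ℝ) * (cesK α i * cesK β (n + 1 - i))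
            + ((n + 1 - i : ℕ) : ℝ) * (cesK α i * cesK β (n + 1 - i)) := by
        intro i hi
        simp only [Finset.mem_range] at hi
        have : ((n + 1 - i : ℕ) : ℝ) = (n : ℝ) + 1 - i := by
          have : i ≤ n + 1 := by omega
          push_cast [this]; ring
        rw [this]; ring
      rw [Finset.sum_congr rfl expand, Finset.sum_add_distrib]
      -- first sum: drop i = 0 term, reindex
      have first : ∑ i ∈ Finset.range (n + 2), (i : ℝ) * (cesK α i * cesK β (n + 1 - i))
          = ∑ i ∈ Finset.range (n + 1), ((i : ℝ) + α) * cesK α i * cesK β (n - i) := by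
        rw [Finset.sum_range_succ']
        simp only [Nat.cast_zero, zero_mul, add_zero]
        refine Finset.sum_congr rfl fun i hi => ?_
        have h1 : n + 1 - (i + 1) = n - i := by omega
        push_cast [h1]
        have := cesK_rec hα i
        calc ((i:ℝ) + 1) * (cesK α (i+1) * cesK β (n - i))
            = (((i:ℝ) + 1) * cesK α (i+1)) * cesK β (n - i) := by ring
          _ = (((i:ℝ) + α) * cesK α i) * cesK β (n - i) := by rw [this]
          _ = ((i:ℝ) + α) * cesK α i * cesK β (n - i) := by ring
      -- second sum: drop i = n+1 term
      have second : ∑ i ∈ Finset.range (n + 2),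
            ((n + 1 - i : ℕ) : ℝ) * (cesK α i * cesK β (n + 1 - i))
          = ∑ i ∈ Finset.range (n + 1), ((n : ℝ) - i + β) * cesK β (n - i) * cesK α i := by
        rw [Finset.sum_range_succ]
        simp only [Nat.sub_self, Nat.cast_zero, zero_mul, add_zero]
        refine Finset.sum_congr rfl fun i hi => ?_
        simp only [Finset.mem_range] at hi
        have h1 : n + 1 - i = (n - i) + 1 := by omega
        have h2 : ((n - i + 1 : ℕ) : ℝ) = ((n - i : ℕ) : ℝ) + 1 := by push_cast; ring
        rw [h1, h2]
        have := cesK_rec hβ (n - i)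
        have h3 : ((n - i : ℕ) : ℝ) = (n : ℝ) - i := by
          have : i ≤ n := by omega
          push_cast [this]; ring
        calc (((n - i:ℕ):ℝ) + 1) * (cesK α i * cesK β ((n-i) + 1))
            = ((((n-i:ℕ):ℝ) + 1) * cesK β ((n-i)+1)) * cesK α i := by ring
          _ = ((((n-i:ℕ):ℝ) + β) * cesK β (n-i)) * cesK α i := by rw [this]
          _ = (((n:ℝ) - i) + β) * cesK β (n-i) * cesK α i := by rw [h3]
      rw [first, second, ← Finset.sum_add_distrib]
      refine Finset.sum_congr rfl fun i hi => ?_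
      ring
    have hrec := cesK_rec (by positivity : (0:ℝ) < α + β) n
    have h2 : ((n:ℝ) + 1) ≠ 0 := by positivity
    have : ((n : ℝ) + 1) * ∑ i ∈ Finset.range (n + 2), cesK α i * cesK β (n + 1 - i)
        = ((n:ℝ) + 1) * cesK (α + β) (n + 1) := by
      rw [key, ih, hrec]; ring_nf
    exact mul_left_cancel₀ h2 this

def EvZ (N : ℕ) (f : ℕ → ℂ) : Prop := ∀ n, N ≤ n → f n = 0

def Dop (f : ℕ → ℂ) : ℕ → ℂ := fun n => f n - f (n + 1)

lemma weylSum_eq_sum {N : ℕ} {f : ℕ → ℂ} (hf : EvZ N f) (γ : ℝ) (n : ℕ) :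
    weylSum γ f n = ∑ j ∈ Finset.range N, (cesK γ j : ℂ) * f (j + n) := by
  apply finsum_eq_sum_of_support_subset
  intro j hj
  simp only [Function.mem_support] at hj
  by_contra hmem
  simp only [Finset.coe_range, Set.mem_Iio, not_lt] at hmem
  exact hj (by rw [hf (j + n) (by omega), mul_zero])

lemma evz_ws {N : ℕ} {f : ℕ → ℂ} (hf : EvZ N f) (γ : ℝ) : EvZ N (weylSum γ f) := by
  intro n hn
  rw [weylSum_eq_sum hf]
  apply Finset.sum_eq_zero
  intro j _
  rw [hf (j + n) (by omega), mul_zero]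

lemma evz_fdiff {N : ℕ} {f : ℕ → ℂ} (hf : EvZ N f) : EvZ N (fdiff f) := by
  intro n hn; simp [fdiff, hf n hn, hf (n+1) (by omega)]

lemma evz_fdiff_iter {N : ℕ} {f : ℕ → ℂ} (hf : EvZ N f) (m : ℕ) : EvZ N (fdiff^[m] f) := by
  induction m with
  | zero => simpa
  | succ m ih => rw [Function.iterate_succ_apply']; exact evz_fdiff ih

lemma evz_D {N : ℕ} {f : ℕ → ℂ} (hf : EvZ N f) : EvZ N (Dop f) := by
  intro n hn; simp [Dop, hf n hn, hf (n+1) (by omega)]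

lemma evz_D_iter {N : ℕ} {f : ℕ → ℂ} (hf : EvZ N f) (m : ℕ) : EvZ N (Dop^[m] f) := by
  induction m with
  | zero => simpa
  | succ m ih => rw [Function.iterate_succ_apply']; exact evz_D ih

lemma Dop_iter_eq (m : ℕ) (f : ℕ → ℂ) (n : ℕ) :
    Dop^[m] f n = (-1 : ℂ) ^ m * fdiff^[m] f n := by
  induction m generalizing n with
  | zero => simp
  | succ m ih =>
    rw [Function.iterate_succ_apply', Function.iterate_succ_apply']
    simp only [Dop, fdiff, ih]
    ring

lemma ws_D {N : ℕ} {f : ℕ → ℂ} (hf : EvZ N f) (γ : ℝ) (n : ℕ) :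
    weylSum γ (Dop f) n = Dop (weylSum γ f) n := by
  rw [weylSum_eq_sum (evz_D hf) γ n]
  simp only [Dop]
  rw [weylSum_eq_sum hf γ n, weylSum_eq_sum hf γ (n+1), ← Finset.sum_sub_distrib]
  refine Finset.sum_congr rfl fun j _ => ?_
  have h : j + (n + 1) = j + n + 1 := by omega
  rw [h]
  ring

lemma ws_one_D {N : ℕ} {f : ℕ → ℂ} (hf : EvZ N f) (n : ℕ) :
    weylSum 1 (Dop f) n = f n := by
  rw [weylSum_eq_sum (evz_D hf) 1 n]
  have : ∀ j ∈ Finset.range N, (cesK 1 j : ℂ) * Dop f (j + n)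
      = (fun i => f (i + n)) j - (fun i => f (i + n)) (j + 1) := by
    intro j _
    simp only [cesK_one_eq, Complex.ofReal_one, one_mul, Dop]
    have : j + 1 + n = j + n + 1 := by omega
    rw [this]
  rw [Finset.sum_congr rfl this, Finset.sum_range_sub']
  simp only [zero_add]
  rw [hf (N + n) (by omega), sub_zero]

lemma ws_comp {N : ℕ} {f : ℕ → ℂ} (hf : EvZ N f) {α β : ℝ} (hα : 0 < α) (hβ : 0 < β)
    (n : ℕ) : weylSum α (weylSum β f) n = weylSum (α + β) f n := by
  rw [weylSum_eq_sum (evz_ws hf β) α n, weylSum_eq_sum hf (α + β) n]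
  have lhs_eq : ∑ j ∈ Finset.range N, (cesK α j : ℂ) * weylSum β f (j + n)
      = ∑ j ∈ Finset.range N, ∑ i ∈ Finset.range (N - j),
          (cesK α j : ℂ) * ((cesK β i : ℂ) * f (i + (j + n))) := by
    refine Finset.sum_congr rfl fun j hj => ?_
    simp only [Finset.mem_range] at hj
    rw [weylSum_eq_sum hf β (j + n), Finset.mul_sum]
    symm
    apply Finset.sum_subset (Finset.range_subset_range.2 (by omega))
    intro i hi hni
    simp only [Finset.mem_range, not_lt] at hni
    rw [hf (i + (j + n)) (by omega), mul_zero, mul_zero]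
  rw [lhs_eq,
    ← Finset.sum_range_diag_flip N (fun a b => (cesK α a : ℂ) * ((cesK β b : ℂ) * f (b + (a + n))))]
  refine Finset.sum_congr rfl fun m hm => ?_
  have step : ∀ s ∈ Finset.range (m + 1),
      (cesK α s : ℂ) * ((cesK β (m - s) : ℂ) * f ((m - s) + (s + n)))
        = ((cesK α s * cesK β (m - s) : ℝ) : ℂ) * f (m + n) := by
    intro s hs
    simp only [Finset.mem_range] at hs
    have : (m - s) + (s + n) = m + n := by omega
    rw [this]
    push_cast
    ring
  rw [Finset.sum_congr rfl step, ← Finset.sum_mul, ← Complex.ofReal_sum,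
    cesK_vandermonde hα hβ m]

lemma ws_D_inv {N : ℕ} {f : ℕ → ℂ} (hf : EvZ N f) (m : ℕ) (n : ℕ) :
    weylSum ((m : ℝ) + 1) (Dop^[m + 1] f) n = f n := by
  induction m generalizing f with
  | zero =>
    simpa using ws_one_D hf n
  | succ m ih =>
    have hcast : ((m + 1 : ℕ) : ℝ) + 1 = (m : ℝ) + 1 + 1 := by push_cast; ring
    rw [hcast, ← ws_comp (evz_D_iter hf (m + 1 + 1)) (by positivity : (0:ℝ) < (m:ℝ) + 1)
      one_pos n]
    have h2 : weylSum 1 (Dop^[m + 1 + 1] f) = Dop^[m + 1] f := by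
      funext k
      rw [Function.iterate_succ_apply' Dop (m + 1) f]
      exact ws_one_D (evz_D_iter hf (m + 1)) k
    rw [h2]
    exact ih hf

lemma weylDiff_eq_D {α : ℝ} (hα : 0 < α) (f : ℕ → ℂ) :
    weylDiff α f = Dop^[⌊α⌋₊ + 1] (weylSum ((⌊α⌋₊ : ℝ) + 1 - α) f) := by
  funext n
  rw [weylDiff, if_neg hα.ne', Dop_iter_eq]

lemma evz_weylDiff {α : ℝ} (hα : 0 < α) {N : ℕ} {f : ℕ → ℂ} (hf : EvZ N f) :
    EvZ N (weylDiff α f) := by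
  rw [weylDiff_eq_D hα]
  exact evz_D_iter (evz_ws hf _) _

lemma ws_D_iter {N : ℕ} {g : ℕ → ℂ} (hg : EvZ N g) (γ : ℝ) (k : ℕ) (n : ℕ) :
    weylSum γ (Dop^[k] g) n = Dop^[k] (weylSum γ g) n := by
  induction k generalizing n with
  | zero => simp
  | succ k ih =>
    rw [Function.iterate_succ_apply' Dop k g, ws_D (evz_D_iter hg k) γ n]
    have : Dop (weylSum γ (Dop^[k] g)) n = Dop (Dop^[k] (weylSum γ g)) n := by
      simp only [Dop, ih]
    rw [this, ← Function.iterate_succ_apply' Dop k (weylSum γ g)]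

lemma ws_weylDiff {α : ℝ} (hα : 0 < α) {N : ℕ} {f : ℕ → ℂ} (hf : EvZ N f) (n : ℕ) :
    weylSum α (weylDiff α f) n = f n := by
  set m := ⌊α⌋₊ with hm
  have hβ : (0 : ℝ) < (m : ℝ) + 1 - α := by
    have := Nat.lt_floor_add_one α
    rw [hm]; push_cast at this ⊢; linarith
  rw [weylDiff_eq_D hα, ws_D_iter (evz_ws hf _) α (m + 1) n]
  have hws : weylSum α (weylSum ((m : ℝ) + 1 - α) f) = weylSum ((m : ℝ) + 1) f := by
    funext k
    rw [ws_comp hf hα hβ k]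
    norm_num
  rw [hws, ← ws_D_iter hf ((m : ℝ) + 1) (m + 1) n, ws_D_inv hf m n]

lemma theta_eq {X : Type*} [NormedAddCommGroup X] [NormedSpace ℂ X]
    {α : ℝ} (hα : 0 < α) (T : X →L[ℂ] X) {N : ℕ} {f : ℕ → ℂ} (hf : EvZ N f) :
    theta α T f = ∑ n ∈ Finset.range N, f n • T ^ n := by
  have hwd : EvZ N (weylDiff α f) := evz_weylDiff hα hf
  have h1 : theta α T f = ∑ n ∈ Finset.range N, weylDiff α f n • cesOp α T n := by
    apply finsum_eq_sum_of_support_subset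
    intro n hn
    simp only [Function.mem_support] at hn
    by_contra hmem
    simp only [Finset.coe_range, Set.mem_Iio, not_lt] at hmem
    exact hn (by rw [hwd n hmem, zero_smul])
  rw [h1]
  have h2 : ∀ n ∈ Finset.range N, weylDiff α f n • cesOp α T n
      = ∑ j ∈ Finset.range (n + 1),
          ((cesK α (n - j) : ℂ) * weylDiff α f (j + (n - j))) • T ^ j := by
    intro n hn
    rw [cesOp, Finset.smul_sum]
    refine Finset.sum_congr rfl fun j hj => ?_
    simp only [Finset.mem_range] at hj
    have : j + (n - j) = n := by omega
    rw [this, smul_smul, mul_comm]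
  rw [Finset.sum_congr rfl h2,
    Finset.sum_range_diag_flip N
      (fun a b => ((cesK α b : ℂ) * weylDiff α f (a + b)) • T ^ a)]
  refine Finset.sum_congr rfl fun j hj => ?_
  simp only [Finset.mem_range] at hj
  rw [← Finset.sum_smul]
  congr 1
  have hext : ∑ i ∈ Finset.range (N - j), (cesK α i : ℂ) * weylDiff α f (j + i)
      = ∑ i ∈ Finset.range N, (cesK α i : ℂ) * weylDiff α f (i + j) := by
    rw [Finset.sum_congr rfl (fun i _ => by rw [Nat.add_comm j i])]
    apply Finset.sum_subset (Finset.range_subset_range.2 (by omega))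
    intro i hi hni
    simp only [Finset.mem_range, not_lt] at hni
    rw [hwd (i + j) (by omega), mul_zero]
  rw [hext, ← weylSum_eq_sum hwd α j, ws_weylDiff hα hf j]

lemma exists_evz (f : ℕ → ℂ) (hf : (Function.support f).Finite) :
    ∃ N, 1 ≤ N ∧ EvZ N f := by
  obtain ⟨B, hB⟩ := hf.bddAbove
  refine ⟨B + 1, by omega, fun n hn => ?_⟩
  by_contra h
  exact absurd (hB (Function.mem_support.2 h)) (by omega)

lemma theta_eq_sum' {X : Type*} [NormedAddCommGroup X] [NormedSpace ℂ X]
    {α : ℝ} (hα : 0 < α) (T : X →L[ℂ] X) {N : ℕ} {f : ℕ → ℂ} (hf : EvZ N f) :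
    theta α T f = ∑ n ∈ Finset.range N, weylDiff α f n • cesOp α T n := by
  apply finsum_eq_sum_of_support_subset
  intro n hn
  simp only [Function.mem_support] at hn
  by_contra hmem
  simp only [Finset.coe_range, Set.mem_Iio, not_lt] at hmem
  exact hn (by rw [evz_weylDiff hα hf n hmem, zero_smul])


theorem stmt15 {X : Type*} [NormedAddCommGroup X] [NormedSpace ℂ X] [CompleteSpace X]
    (α : ℝ) (hα : 0 < α) (φ : ℕ → ℝ) (hφpos : ∀ n, 0 < φ n) (c : ℝ) (hc : 0 < c)
    (hφ : omegaLoc α φ c) (T : X →L[ℂ] X) (C : ℝ) (hC : 0 < C)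
    (hT : ∀ n : ℕ, ‖cesOp α T n‖ ≤ C * φ n) :
    (∀ f : ℕ → ℂ, (Function.support f).Finite → ∀ x : X,
        ‖theta α T f x‖ ≤ C * qNorm α φ f * ‖x‖) ∧
    (∀ f g : ℕ → ℂ, (Function.support f).Finite → (Function.support g).Finite →
        theta α T (fun n => conv f g n) = theta α T f * theta α T g) ∧
    (∀ n : ℕ, theta α T (hseq α n) = cesOp α T n) ∧
    theta α T (eseq 0) = 1 ∧ theta α T (eseq 1) = T := by
  have coeff_eq : ∀ (f : ℕ → ℂ) (N : ℕ), EvZ N f →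
      ∀ n, (∑ i ∈ Finset.range N, Polynomial.C (f i) * Polynomial.X ^ i).coeff n = f n := by
    intro f N hN n
    rw [Polynomial.finset_sum_coeff]
    simp only [Polynomial.coeff_C_mul, Polynomial.coeff_X_pow, mul_ite, mul_one, mul_zero]
    simp only [eq_comm (a := n)]
    rw [Finset.sum_ite_eq' (Finset.range N) n f]
    by_cases h : n ∈ Finset.range N
    · rw [if_pos h]
    · rw [if_neg h, hN n (by simpa [Finset.mem_range, not_lt] using h)]
  have aeval_eq : ∀ (f : ℕ → ℂ) (N : ℕ),
      Polynomial.aeval T (∑ i ∈ Finset.range N, Polynomial.C (f i) * Polynomial.X ^ i)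
        = ∑ i ∈ Finset.range N, f i • T ^ i := by
    intro f N
    rw [map_sum]
    exact Finset.sum_congr rfl fun i _ => by simp [Algebra.smul_def]
  refine ⟨?_, ?_, ?_, ?_, ?_⟩
  · -- Part 1
    intro f hf x
    obtain ⟨N, hN1, hN⟩ := exists_evz f hf
    have hwd := evz_weylDiff hα hN
    have hq : qNorm α φ f = ∑ n ∈ Finset.range N, φ n * ‖weylDiff α f n‖ := by
      apply finsum_eq_sum_of_support_subset
      intro n hn
      simp only [Function.mem_support] at hn
      by_contra hmem
      simp only [Finset.coe_range, Set.mem_Iio, not_lt] at hmem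
      exact hn (by rw [hwd n hmem]; simp)
    rw [theta_eq_sum' hα T hN, hq]
    have e1 : (∑ n ∈ Finset.range N, weylDiff α f n • cesOp α T n) x
        = ∑ n ∈ Finset.range N, weylDiff α f n • (cesOp α T n x) := by
      rw [ContinuousLinearMap.sum_apply]
      exact Finset.sum_congr rfl fun n _ => rfl
    rw [e1]
    calc ‖∑ n ∈ Finset.range N, weylDiff α f n • (cesOp α T n x)‖
        ≤ ∑ n ∈ Finset.range N, ‖weylDiff α f n • (cesOp α T n x)‖ :=
          norm_sum_le _ _
      _ ≤ ∑ n ∈ Finset.range N, (φ n * ‖weylDiff α f n‖) * (C * ‖x‖) := by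
          refine Finset.sum_le_sum fun n _ => ?_
          rw [norm_smul]
          have h1 : ‖cesOp α T n x‖ ≤ (C * φ n) * ‖x‖ :=
            le_trans (ContinuousLinearMap.le_opNorm _ x)
              (mul_le_mul_of_nonneg_right (hT n) (norm_nonneg x))
          calc ‖weylDiff α f n‖ * ‖cesOp α T n x‖
              ≤ ‖weylDiff α f n‖ * ((C * φ n) * ‖x‖) :=
                mul_le_mul_of_nonneg_left h1 (norm_nonneg _)
            _ = (φ n * ‖weylDiff α f n‖) * (C * ‖x‖) := by
                ring
      _ = C * (∑ n ∈ Finset.range N, φ n * ‖weylDiff α f n‖) * ‖x‖ := by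
          rw [← Finset.sum_mul]; ring
  · -- Part 2
    intro f g hf hg
    obtain ⟨Nf, hNf1, hNf⟩ := exists_evz f hf
    obtain ⟨Ng, hNg1, hNg⟩ := exists_evz g hg
    set Ff := ∑ i ∈ Finset.range Nf, Polynomial.C (f i) * Polynomial.X ^ i with hFf
    set Fg := ∑ i ∈ Finset.range Ng, Polynomial.C (g i) * Polynomial.X ^ i with hFg
    have hconv : EvZ (Nf + Ng) (fun n => conv f g n) := by
      intro n hn
      apply Finset.sum_eq_zero
      intro j hj
      simp only [Finset.mem_range] at hj
      by_cases h : j < Ng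
      · rw [hNf (n - j) (by omega), zero_mul]
      · rw [hNg j (by omega), mul_zero]
    have hcoeff : ∀ n, (Ff * Fg).coeff n = conv f g n := by
      intro n
      rw [Polynomial.coeff_mul, Finset.Nat.sum_antidiagonal_eq_sum_range_succ_mk]
      simp only [hFf, hFg, coeff_eq f Nf hNf, coeff_eq g Ng hNg]
      rw [conv, ← Finset.sum_range_reflect]
      refine Finset.sum_congr rfl fun j hj => ?_
      simp only [Finset.mem_range] at hj
      have e1 : n + 1 - 1 - j = n - j := by omega
      have e2 : n - (n - j) = j := by omega
      rw [e1, e2]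
    have hdeg : (Ff * Fg).natDegree < Nf + Ng := by
      rcases eq_or_ne (Ff * Fg) 0 with h0 | h0
      · rw [h0, Polynomial.natDegree_zero]; omega
      · by_contra hcon
        push_neg at hcon
        have h1 : (Ff * Fg).coeff (Ff * Fg).natDegree ≠ 0 := by
          rw [← Polynomial.leadingCoeff]
          exact Polynomial.leadingCoeff_ne_zero.mpr h0
        exact h1 (by rw [hcoeff]; exact hconv _ hcon)
    calc theta α T (fun n => conv f g n)
        = ∑ n ∈ Finset.range (Nf + Ng), conv f g n • T ^ n := theta_eq hα T hconv
      _ = ∑ n ∈ Finset.range (Nf + Ng), (Ff * Fg).coeff n • T ^ n := by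
          exact Finset.sum_congr rfl fun n _ => by rw [hcoeff]
      _ = Polynomial.aeval T (Ff * Fg) := (Polynomial.aeval_eq_sum_range' hdeg T).symm
      _ = Polynomial.aeval T Ff * Polynomial.aeval T Fg := map_mul _ _ _
      _ = theta α T f * theta α T g := by
          rw [hFf, hFg, aeval_eq f Nf, aeval_eq g Ng, theta_eq hα T hNf, theta_eq hα T hNg]
  · -- Part 3
    intro n
    have hh : EvZ (n + 1) (hseq α n) := by
      intro j hj
      simp only [hseq, if_neg (by omega : ¬ j ≤ n)]
    rw [theta_eq hα T hh, cesOp]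
    refine Finset.sum_congr rfl fun j hj => ?_
    simp only [Finset.mem_range] at hj
    rw [hseq, if_pos (by omega : j ≤ n)]
  · -- e0
    have h0 : EvZ 1 (eseq 0) := by
      intro j hj
      simp only [eseq, if_neg (by omega : ¬ j = 0)]
    rw [theta_eq hα T h0]
    simp [eseq]
  · -- e1
    have h1 : EvZ 2 (eseq 1) := by
      intro j hj
      simp only [eseq, if_neg (by omega : ¬ j = 1)]
    rw [theta_eq hα T h1]
    rw [Finset.sum_range_succ, Finset.sum_range_one]
    simp [eseq]
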